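/- For every A ∈ ℂ^{n₁+1} and B ∈ ℂ^{n₃+1}, the map F(·,A,B) is conformal on 𝔻: for every z ∈ 𝔻, ‖∂F/∂x(z,A,B)‖ = ‖∂F/∂y(z,A,B)‖ and ⟨∂F/∂x(z,A,B), ∂F/∂y(z,A,B)⟩ = 0, where the partial derivatives are taken in z = x + iy and ⟨·,·⟩ is the Euclidean inner product on ℝ⁴ ≅ ℂ². -/

import Mathlib

open Complex ComplexConjugate Metric

/-- The monic-plus-perturbation polynomial `P_A(z) = z^n + Σ_{i=0}^n aᵢ zⁱ`. -/
noncomputable def Ppoly (n : ℕ) (A : Fin (n + 1) → ℂ) (z : ℂ) : ℂ :=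
  z ^ n + ∑ i : Fin (n + 1), A i * z ^ (i : ℕ)

/-- The Euclidean inner product on `ℝ⁴ ≅ ℂ²`. -/
noncomputable def inner4 (u v : ℂ × ℂ) : ℝ :=
  (u.1 * conj v.1).re + (u.2 * conj v.2).re

/-- The Euclidean norm on `ℝ⁴ ≅ ℂ²`. -/
noncomputable def norm4 (u : ℂ × ℂ) : ℝ :=
  Real.sqrt (Complex.normSq u.1 + Complex.normSq u.2)


lemma key_alg_conf (a b c d : ℂ) (h : a*b + c*d = 0) :
    norm4 (a*1 + conj (b*1), c*1 + conj (d*1)) = norm4 (a*I + conj (b*I), c*I + conj (d*I)) ∧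
    inner4 (a*1 + conj (b*1), c*1 + conj (d*1)) (a*I + conj (b*I), c*I + conj (d*I)) = 0 := by
  have hre := congrArg Complex.re h
  have him := congrArg Complex.im h
  simp only [Complex.add_re, Complex.add_im, Complex.mul_re, Complex.mul_im,
    Complex.zero_re, Complex.zero_im] at hre him
  constructor
  · unfold norm4
    congr 1
    simp only [Complex.normSq_apply, Complex.add_re, Complex.add_im, Complex.conj_re,
      Complex.conj_im, Complex.mul_re, Complex.mul_im, Complex.I_re, Complex.I_im,
      Complex.one_re, Complex.one_im]
    ring_nf
    nlinarith [hre, him]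
  · unfold inner4
    simp only [Complex.add_re, Complex.add_im, Complex.conj_re, Complex.conj_im,
      Complex.mul_re, Complex.mul_im, Complex.I_re, Complex.I_im, Complex.one_re,
      Complex.one_im, RingHom.coe_coe]
    ring_nf
    nlinarith [hre, him]

lemma key_fderiv_conf (g₁ g₂ g₃ g₄ : ℂ → ℂ) (a b c d : ℂ) (z : ℂ)
    (h1 : HasDerivAt g₁ a z) (h2 : HasDerivAt g₂ b z)
    (h3 : HasDerivAt g₃ c z) (h4 : HasDerivAt g₄ d z) :
    ∀ v : ℂ, fderiv ℝ (fun w => (g₁ w + conj (g₂ w), g₃ w + conj (g₄ w))) z v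
      = (a*v + conj (b*v), c*v + conj (d*v)) := by
  have H1 := (h1.hasFDerivAt.restrictScalars ℝ)
  have H2 := Complex.conjCLE.toContinuousLinearMap.hasFDerivAt.comp z
    (h2.hasFDerivAt.restrictScalars ℝ)
  have H3 := (h3.hasFDerivAt.restrictScalars ℝ)
  have H4 := Complex.conjCLE.toContinuousLinearMap.hasFDerivAt.comp z
    (h4.hasFDerivAt.restrictScalars ℝ)
  have HF := (HasFDerivAt.prodMk (H1.add H2) (H3.add H4))
  simp only [Function.comp_def, ContinuousLinearEquiv.coe_coe, Complex.conjCLE_apply, Pi.add_apply] at HF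
  intro v
  rw [HF.fderiv]
  simp [ContinuousLinearMap.smulRight_apply, Complex.conjCLE_apply, smul_eq_mul, mul_comm]

/-- Every deformed map `F(·,A,B)` (with `fᵢ(z,A,B) = ∫₀^z hᵢ(ξ,A,B) dξ`)
is conformal on the unit disk. -/
theorem deformed_maps_are_conformal
    (n₁ n₂ n₃ n₄ : ℕ)
    (h12 : n₁ < n₂) (h13 : n₁ < n₃) (h14 : n₁ < n₄) (h32 : n₃ < n₂)
    (hsum : n₁ + n₂ = n₃ + n₄)
    (t₁ t₂ t₃ t₄ f₁ f₂ f₃ f₄ : ℂ → ℂ)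
    (ht₁ : DifferentiableOn ℂ t₁ (ball (0:ℂ) 1))
    (ht₂ : DifferentiableOn ℂ t₂ (ball (0:ℂ) 1))
    (ht₃ : DifferentiableOn ℂ t₃ (ball (0:ℂ) 1))
    (ht₄ : DifferentiableOn ℂ t₄ (ball (0:ℂ) 1))
    (ht₁0 : t₁ 0 ≠ 0) (ht₂0 : t₂ 0 ≠ 0) (ht₃0 : t₃ 0 ≠ 0) (ht₄0 : t₄ 0 ≠ 0)
    (hf₁ : ∀ z ∈ ball (0:ℂ) 1, HasDerivAt f₁ (z ^ n₁ * t₁ z) z)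
    (hf₂ : ∀ z ∈ ball (0:ℂ) 1, HasDerivAt f₂ (z ^ n₂ * t₂ z) z)
    (hf₃ : ∀ z ∈ ball (0:ℂ) 1, HasDerivAt f₃ (z ^ n₃ * t₃ z) z)
    (hf₄ : ∀ z ∈ ball (0:ℂ) 1, HasDerivAt f₄ (z ^ n₄ * t₄ z) z)
    (hconf : ∀ z ∈ ball (0:ℂ) 1,
      (z ^ n₁ * t₁ z) * (z ^ n₂ * t₂ z) + (z ^ n₃ * t₃ z) * (z ^ n₄ * t₄ z) = 0)
    (g₁ g₂ g₃ g₄ : (Fin (n₁ + 1) → ℂ) → (Fin (n₃ + 1) → ℂ) → ℂ → ℂ)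
    (hg₁0 : ∀ A B, g₁ A B 0 = 0) (hg₂0 : ∀ A B, g₂ A B 0 = 0)
    (hg₃0 : ∀ A B, g₃ A B 0 = 0) (hg₄0 : ∀ A B, g₄ A B 0 = 0)
    (hg₁ : ∀ A B, ∀ z ∈ ball (0:ℂ) 1,
      HasDerivAt (g₁ A B) (Ppoly n₁ A z * t₁ z) z)
    (hg₂ : ∀ A B, ∀ z ∈ ball (0:ℂ) 1,
      HasDerivAt (g₂ A B) (z ^ (n₂ - n₃) * (Ppoly n₃ B z * t₂ z)) z)
    (hg₃ : ∀ A B, ∀ z ∈ ball (0:ℂ) 1,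
      HasDerivAt (g₃ A B) (Ppoly n₃ B z * t₃ z) z)
    (hg₄ : ∀ A B, ∀ z ∈ ball (0:ℂ) 1,
      HasDerivAt (g₄ A B) (z ^ (n₄ - n₁) * (Ppoly n₁ A z * t₄ z)) z)
    (FF : (Fin (n₁ + 1) → ℂ) → (Fin (n₃ + 1) → ℂ) → ℂ → ℂ × ℂ)
    (hFF : ∀ A B z, FF A B z =
      (g₁ A B z + conj (g₂ A B z), g₃ A B z + conj (g₄ A B z)))
    :
    ∀ (A : Fin (n₁ + 1) → ℂ) (B : Fin (n₃ + 1) → ℂ), ∀ z ∈ ball (0:ℂ) 1,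
      norm4 (fderiv ℝ (FF A B) z 1) = norm4 (fderiv ℝ (FF A B) z Complex.I) ∧
      inner4 (fderiv ℝ (FF A B) z 1) (fderiv ℝ (FF A B) z Complex.I) = 0 := by
  intro A B z hz
  have hFFfun : FF A B = fun w => (g₁ A B w + conj (g₂ A B w), g₃ A B w + conj (g₄ A B w)) :=
    funext (hFF A B)
  set a := Ppoly n₁ A z * t₁ z with ha
  set b := z ^ (n₂ - n₃) * (Ppoly n₃ B z * t₂ z) with hb
  set c := Ppoly n₃ B z * t₃ z with hc
  set d := z ^ (n₄ - n₁) * (Ppoly n₁ A z * t₄ z) with hd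
  have hkey : a * b + c * d = 0 := by
    rcases eq_or_ne z 0 with rfl | hz0
    · have e1 : (0:ℂ) ^ (n₂ - n₃) = 0 := zero_pow (by omega)
      have e2 : (0:ℂ) ^ (n₄ - n₁) = 0 := zero_pow (by omega)
      simp [hb, hd, e1, e2]
    · have h0 := hconf z hz
      have hT : t₁ z * t₂ z + t₃ z * t₄ z = 0 := by
        have : z ^ (n₁ + n₂) * (t₁ z * t₂ z + t₃ z * t₄ z) = 0 := by
          have h34 : z ^ (n₃ + n₄) = z ^ (n₁ + n₂) := by rw [hsum]
          calc z ^ (n₁ + n₂) * (t₁ z * t₂ z + t₃ z * t₄ z)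
              = z ^ n₁ * t₁ z * (z ^ n₂ * t₂ z) + z ^ (n₃ + n₄) * (t₃ z * t₄ z) := by
                rw [h34, pow_add]; ring
            _ = z ^ n₁ * t₁ z * (z ^ n₂ * t₂ z) + z ^ n₃ * t₃ z * (z ^ n₄ * t₄ z) := by
                rw [pow_add]; ring
            _ = 0 := h0
        rcases mul_eq_zero.mp this with h | h
        · exact absurd h (pow_ne_zero _ hz0)
        · exact h
      have hexp : n₄ - n₁ = n₂ - n₃ := by omega
      rw [ha, hb, hc, hd, hexp]
      calc Ppoly n₁ A z * t₁ z * (z ^ (n₂ - n₃) * (Ppoly n₃ B z * t₂ z)) +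
            Ppoly n₃ B z * t₃ z * (z ^ (n₂ - n₃) * (Ppoly n₁ A z * t₄ z))
          = Ppoly n₁ A z * Ppoly n₃ B z * z ^ (n₂ - n₃) * (t₁ z * t₂ z + t₃ z * t₄ z) := by ring
        _ = 0 := by rw [hT, mul_zero]
  have hder := key_fderiv_conf (g₁ A B) (g₂ A B) (g₃ A B) (g₄ A B) a b c d z
    (hg₁ A B z hz) (hg₂ A B z hz) (hg₃ A B z hz) (hg₄ A B z hz)
  rw [hFFfun, hder 1, hder Complex.I]
  exact key_alg_conf a b c d hkey
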